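/- Let p ∈ (0,1], b > 0, and let y₁,…,yₙ be real numbers with 0 ≤ yᵢ ≤ p for all i and ∑ᵢ yᵢ ≤ b. Then ∏ᵢ (1 - yᵢ) ≥ (1-p)^{b/p}. -/

import Mathlib

theorem stmt_3 (n : ℕ) (p b : ℝ) (hp : p ∈ Set.Ioc (0:ℝ) 1) (hb : 0 < b)
    (y : Fin n → ℝ) (hy : ∀ i, 0 ≤ y i ∧ y i ≤ p)
    (hsum : ∑ i, y i ≤ b) :
    (1 - p) ^ (b / p) ≤ ∏ i, (1 - y i) := by
  obtain ⟨hp0, hp1⟩ := hp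
  rcases eq_or_lt_of_le hp1 with h1 | h1
  · -- p = 1 : base is 0
    subst h1
    rw [sub_self, Real.zero_rpow (by positivity)]
    exact Finset.prod_nonneg fun i _ => by linarith [(hy i).2]
  · have hc0 : (0:ℝ) < 1 - p := by linarith
    have hc1 : 1 - p ≤ 1 := by linarith
    -- step 1: (1-p)^(b/p) ≤ (1-p)^((∑ y)/p)
    have hs0 : (0:ℝ) ≤ ∑ i, y i := Finset.sum_nonneg fun i _ => (hy i).1
    have step1 : (1 - p) ^ (b / p) ≤ (1 - p) ^ ((∑ i, y i) / p) :=
      Real.rpow_le_rpow_of_exponent_ge hc0 hc1 (by gcongr)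
    refine step1.trans ?_
    -- step 2: (1-p)^((∑ y)/p) = ∏ (1-p)^(y i / p)
    have step2 : (1 - p) ^ ((∑ i, y i) / p) = ∏ i, (1 - p) ^ (y i / p) := by
      rw [Finset.sum_div]
      induction (Finset.univ : Finset (Fin n)) using Finset.induction with
      | empty => simp
      | insert _ _ hx ih =>
          rw [Finset.sum_insert hx, Finset.prod_insert hx, Real.rpow_add hc0, ih]
    rw [step2]
    -- step 3: pointwise (1-p)^(y i / p) ≤ 1 - y i
    refine Finset.prod_le_prod (fun i _ => (Real.rpow_pos_of_pos hc0 _).le) fun i _ => ?_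
    obtain ⟨h0, hyp⟩ := hy i
    -- convexity of exp: exp(t * log c) ≤ (1-t) + t * c with t = y i / p
    have ht0 : 0 ≤ y i / p := div_nonneg h0 hp0.le
    have ht1 : y i / p ≤ 1 := (div_le_one hp0).2 hyp
    have hconv := convexOn_exp.2 (Set.mem_univ 0) (Set.mem_univ (Real.log (1 - p)))
      (by linarith : (0:ℝ) ≤ 1 - y i / p) ht0 (by ring)
    rw [smul_eq_mul, smul_eq_mul, smul_eq_mul, smul_eq_mul, mul_zero, zero_add,
      Real.exp_zero, Real.exp_log hc0] at hconv
    rw [Real.rpow_def_of_pos hc0, mul_comm]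
    have : (1 - y i / p) * 1 + y i / p * (1 - p) = 1 - y i := by
      field_simp
      ring
    linarith [hconv, this ▸ hconv]
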